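/- arXiv:1309.4605 — 5 statements merged into one kernel-verified Lean document; each statement's English description precedes it below -/
import Mathlib

section
/- Let μ : [0,∞) → [0,∞) be nonincreasing with 0 < ∫₀^∞ μ(s) ds < ∞, and suppose there exist C ≥ 1 and δ > 0 such that μ(σ+s) ≤ C e^{-δσ} μ(s) for all σ ≥ 0 and s > 0. Then for every measurable g : (0,∞) → [0,∞) one has ∫₀^∞ μ(s) (∫₀^s g(σ) dσ) ds ≤ (√(4Cm)/δ) · (∫₀^∞ μ(σ) g(σ)² dσ)^{1/2}, where m = ∫₀^∞ μ(s) ds. -/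
open MeasureTheory Set ENNReal

lemma half_sq (x : ℝ≥0∞) : (x ^ ((1:ℝ)/2)) ^ 2 = x := by
  rw [← ENNReal.rpow_natCast (x ^ ((1:ℝ)/2)) 2, ← ENNReal.rpow_mul]
  norm_num

lemma rpow_two' (x : ℝ≥0∞) : x ^ (2:ℝ) = x ^ 2 := by
  rw [← ENNReal.rpow_natCast x 2]; norm_num

lemma myCS {α : Type*} [MeasurableSpace α] (μ : Measure α) {f h : α → ℝ≥0∞}
    (hf : AEMeasurable f μ) (hh : AEMeasurable h μ) :
    (∫⁻ a, f a * h a ∂μ) ^ 2 ≤ (∫⁻ a, f a ^ 2 ∂μ) * (∫⁻ a, h a ^ 2 ∂μ) := by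
  have H := ENNReal.lintegral_mul_le_Lp_mul_Lq μ
    (Real.HolderConjugate.two_two : Real.HolderConjugate 2 2) hf hh
  simp only [Pi.mul_apply, rpow_two'] at H
  calc (∫⁻ a, f a * h a ∂μ) ^ 2
      ≤ ((∫⁻ a, f a ^ 2 ∂μ) ^ ((1:ℝ)/2) * (∫⁻ a, h a ^ 2 ∂μ) ^ ((1:ℝ)/2)) ^ 2 := by
        gcongr
    _ = _ := by rw [mul_pow, half_sq, half_sq]

-- tail integral
lemma exp_tail {b : ℝ} (hb : 0 < b) (σ : ℝ) :
    ∫⁻ s in Ioi σ, ENNReal.ofReal (Real.exp (-(b * (s - σ)))) = ENNReal.ofReal (1/b) := by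
  have hint : IntegrableOn (fun s => Real.exp (-(b * (s - σ)))) (Ioi σ) := by
    have : (fun s => Real.exp (-(b * (s - σ)))) = fun s => Real.exp (b * σ) * Real.exp (-b * s) := by
      funext s; rw [← Real.exp_add]; ring_nf
    rw [this]
    exact (exp_neg_integrableOn_Ioi σ hb).const_mul _
  rw [← ofReal_integral_eq_lintegral_ofReal hint (ae_of_all _ fun s => (Real.exp_pos _).le)]
  congr 1
  have h1 : (∫ s in Ioi σ, Real.exp (-(b * (s - σ))))
      = Real.exp (b * σ) * ∫ s in Ioi σ, Real.exp (-(b * s)) := by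
    rw [← MeasureTheory.integral_const_mul]
    congr 1; funext s; rw [← Real.exp_add]; ring_nf
  have h2 : (∫ s in Ioi σ, Real.exp (-(b * s))) = b⁻¹ * Real.exp (-(b * σ)) := by
    have := integral_comp_mul_left_Ioi (fun x => Real.exp (-x)) σ hb
    simp only [smul_eq_mul] at this
    rw [this, integral_exp_neg_Ioi]
  rw [h1, h2]
  rw [show Real.exp (b * σ) * (b⁻¹ * Real.exp (-(b * σ))) = b⁻¹ * (Real.exp (b*σ) * Real.exp (-(b*σ))) by ring,
    ← Real.exp_add]
  simp [one_div]

-- Ioo exp bound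
lemma exp_Ioo {b : ℝ} (hb : 0 < b) {s : ℝ} (hs : 0 < s) :
    ∫⁻ x in Ioo 0 s, ENNReal.ofReal (Real.exp (b * x)) ≤ ENNReal.ofReal (Real.exp (b * s) / b) := by
  have hsub : ∫⁻ x in Ioo 0 s, ENNReal.ofReal (Real.exp (b * x))
      ≤ ∫⁻ x in Ioc 0 s, ENNReal.ofReal (Real.exp (b * x)) :=
    lintegral_mono' (Measure.restrict_mono Ioo_subset_Ioc_self le_rfl) le_rfl
  refine hsub.trans ?_
  have hint : IntegrableOn (fun x => Real.exp (b * x)) (Ioc 0 s) :=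
    (Real.continuous_exp.comp (continuous_const.mul continuous_id)).integrableOn_Ioc
  rw [← ofReal_integral_eq_lintegral_ofReal hint (ae_of_all _ fun x => (Real.exp_pos _).le)]
  apply ENNReal.ofReal_le_ofReal
  have h3 : (∫ x in Ioc 0 s, Real.exp (b * x)) = ∫ x in (0:ℝ)..s, Real.exp (b * x) :=
    (intervalIntegral.integral_of_le hs.le).symm
  have h4 : (∫ x in (0:ℝ)..s, Real.exp (b * x)) = b⁻¹ * (Real.exp (b * s) - 1) := by
    have := intervalIntegral.integral_comp_mul_left (a := (0:ℝ)) (b := s) Real.exp hb.ne'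
    simp only [smul_eq_mul, mul_zero] at this
    rw [this, integral_exp, Real.exp_zero]
  rw [h3, h4]
  rw [div_eq_inv_mul]
  have : 0 < b⁻¹ := inv_pos.2 hb
  nlinarith [Real.exp_pos (b*s)]

lemma key_pointwise (μ : ℝ → ℝ) (hμ0 : ∀ s, 0 ≤ μ s) (C δ : ℝ) (hδ : 0 < δ)
    (hdec : ∀ σ ≥ (0:ℝ), ∀ s > (0:ℝ), μ (σ + s) ≤ C * Real.exp (-δ * σ) * μ s)
    (hC : 0 ≤ C)
    (g : ℝ → ℝ) (hg : Measurable g)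
    (ν : ℝ → ℝ≥0∞) (hνm : Measurable ν) (hνeq : ∀ x > (0:ℝ), ν x = ENNReal.ofReal (μ x))
    (s : ℝ) (hs : 0 < s) :
    ν s * (∫⁻ σ in Ioo 0 s, ENNReal.ofReal (g σ)) ^ 2
      ≤ ENNReal.ofReal (2 * C / δ) *
        ∫⁻ σ in Ioo 0 s, ν σ * ENNReal.ofReal (g σ) ^ 2 *
          ENNReal.ofReal (Real.exp (-(δ / 2 * (s - σ)))) := by
  by_cases hμs : μ s = 0
  · rw [hνeq s hs, hμs]; simp
  have hμsp : 0 < μ s := (hμ0 s).lt_of_ne (Ne.symm hμs)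
  have hpos : ∀ σ ∈ Ioo (0:ℝ) s, 0 < μ σ := by
    intro σ hσ
    rcases hσ with ⟨h1, h2⟩
    by_contra h
    push_neg at h
    have hz : μ σ = 0 := le_antisymm h (hμ0 σ)
    have := hdec (s - σ) (by linarith) σ h1
    rw [sub_add_cancel, hz, mul_zero] at this
    linarith
  set W : ℝ → ℝ≥0∞ := fun σ => ν σ * ENNReal.ofReal (Real.exp (δ / 2 * σ)) with hW
  have hWm : Measurable W :=
    hνm.mul (Real.measurable_exp.comp (measurable_const.mul measurable_id)).ennreal_ofReal
  have hWfin : ∀ σ ∈ Ioo (0:ℝ) s, W σ ≠ ⊤ := by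
    intro σ hσ
    simp only [hW, hνeq σ hσ.1]
    exact ENNReal.mul_ne_top ENNReal.ofReal_ne_top ENNReal.ofReal_ne_top
  have hWpos : ∀ σ ∈ Ioo (0:ℝ) s, W σ ≠ 0 := by
    intro σ hσ
    simp only [hW, hνeq σ hσ.1, ← ENNReal.ofReal_mul (hμ0 σ)]
    exact (ENNReal.ofReal_pos.2 (mul_pos (hpos σ hσ) (Real.exp_pos _))).ne'
  set f : ℝ → ℝ≥0∞ := fun σ => ENNReal.ofReal (g σ) * (W σ) ^ ((1:ℝ)/2) with hf
  set h : ℝ → ℝ≥0∞ := fun σ => ((W σ) ^ ((1:ℝ)/2))⁻¹ with hh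
  have hfm : Measurable f := hg.ennreal_ofReal.mul (hWm.pow_const _)
  have hhm : Measurable h := (hWm.pow_const _).inv
  have hfh : ∫⁻ σ in Ioo 0 s, ENNReal.ofReal (g σ) = ∫⁻ σ in Ioo 0 s, f σ * h σ := by
    apply setLIntegral_congr_fun measurableSet_Ioo
    intro σ hσ
    have h0 : (W σ) ^ ((1:ℝ)/2) ≠ 0 := by
      simp [ENNReal.rpow_eq_zero_iff, hWpos σ hσ, hWfin σ hσ]
    have htop : (W σ) ^ ((1:ℝ)/2) ≠ ⊤ := by
      simp [ENNReal.rpow_eq_top_iff, hWpos σ hσ, hWfin σ hσ]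
    beta_reduce
    rw [hf, hh, mul_assoc, ENNReal.mul_inv_cancel h0 htop, mul_one]
  have hCS := myCS (volume.restrict (Ioo 0 s)) hfm.aemeasurable hhm.aemeasurable
  rw [← hfh] at hCS
  have hf2 : ∀ σ, f σ ^ 2 = ENNReal.ofReal (g σ) ^ 2 * W σ := by
    intro σ; rw [hf, mul_pow, half_sq]
  have hh2 : ∀ σ, h σ ^ 2 = (W σ)⁻¹ := by
    intro σ; rw [hh, ← ENNReal.inv_pow, half_sq]
  simp only [hf2, hh2] at hCS
  -- bound on ∫ W⁻¹
  have hWinv : ∫⁻ σ in Ioo 0 s, (W σ)⁻¹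
      ≤ ENNReal.ofReal (2 * C / δ * Real.exp (-(δ / 2 * s)) / μ s) := by
    have hptwise : ∀ σ ∈ Ioo (0:ℝ) s, (W σ)⁻¹
        ≤ ENNReal.ofReal (C / μ s * Real.exp (-δ * s)) *
            ENNReal.ofReal (Real.exp (δ / 2 * σ)) := by
      intro σ hσ
      have hμσ := hpos σ hσ
      have hWσ : W σ = ENNReal.ofReal (μ σ * Real.exp (δ / 2 * σ)) := by
        simp only [hW]; rw [hνeq σ hσ.1, ← ENNReal.ofReal_mul (hμ0 σ)]
      rw [hWσ, ← ENNReal.ofReal_inv_of_pos (mul_pos hμσ (Real.exp_pos _)),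
        ← ENNReal.ofReal_mul (mul_nonneg (div_nonneg hC hμsp.le) (Real.exp_pos _).le)]
      apply ENNReal.ofReal_le_ofReal
      have hd := hdec (s - σ) (by linarith [hσ.2]) σ hσ.1
      rw [sub_add_cancel] at hd
      have hgoal : μ s ≤ C * Real.exp (-δ * s) * Real.exp (δ / 2 * σ) *
          Real.exp (δ / 2 * σ) * μ σ := by
        calc μ s ≤ C * Real.exp (-δ * (s - σ)) * μ σ := hd
          _ = _ := by
            rw [show -δ * (s - σ) = -δ * s + (δ / 2 * σ + δ / 2 * σ) by ring,
              Real.exp_add, Real.exp_add]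
            ring
      have hA : 0 < μ σ * Real.exp (δ / 2 * σ) := by positivity
      rw [inv_eq_one_div, div_le_iff₀ hA]
      rw [div_mul_eq_mul_div, div_mul_eq_mul_div, div_mul_eq_mul_div, le_div_iff₀ hμsp, one_mul]
      nlinarith [hgoal]
    calc ∫⁻ σ in Ioo 0 s, (W σ)⁻¹
        ≤ ∫⁻ σ in Ioo 0 s, ENNReal.ofReal (C / μ s * Real.exp (-δ * s)) *
            ENNReal.ofReal (Real.exp (δ / 2 * σ)) := by
          apply setLIntegral_mono
            (measurable_const.mul
              (Real.measurable_exp.comp (measurable_const.mul measurable_id)).ennreal_ofReal)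
          exact hptwise
      _ = ENNReal.ofReal (C / μ s * Real.exp (-δ * s)) *
            ∫⁻ σ in Ioo 0 s, ENNReal.ofReal (Real.exp (δ / 2 * σ)) :=
          lintegral_const_mul' _ _ ENNReal.ofReal_ne_top
      _ ≤ ENNReal.ofReal (C / μ s * Real.exp (-δ * s)) *
            ENNReal.ofReal (Real.exp (δ / 2 * s) / (δ / 2)) := by
          exact mul_le_mul_right (exp_Ioo (by positivity) hs) _
      _ = ENNReal.ofReal (2 * C / δ * Real.exp (-(δ / 2 * s)) / μ s) := by
          rw [← ENNReal.ofReal_mul (mul_nonneg (div_nonneg hC hμsp.le) (Real.exp_pos _).le)]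
          congr 1
          rw [show -(δ / 2 * s) = -δ * s + δ / 2 * s by ring, Real.exp_add]
          field_simp
  -- combine
  calc ν s * (∫⁻ σ in Ioo 0 s, ENNReal.ofReal (g σ)) ^ 2
      ≤ ν s * ((∫⁻ σ in Ioo 0 s, ENNReal.ofReal (g σ) ^ 2 * W σ) *
          ENNReal.ofReal (2 * C / δ * Real.exp (-(δ / 2 * s)) / μ s)) := by
        refine mul_le_mul_right (hCS.trans ?_) _
        exact mul_le_mul_right hWinv _
    _ = (ν s * ENNReal.ofReal (2 * C / δ * Real.exp (-(δ / 2 * s)) / μ s)) *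
          (∫⁻ σ in Ioo 0 s, ENNReal.ofReal (g σ) ^ 2 * W σ) := by ring
    _ = ENNReal.ofReal (2 * C / δ) * (ENNReal.ofReal (Real.exp (-(δ / 2 * s))) *
          ∫⁻ σ in Ioo 0 s, ENNReal.ofReal (g σ) ^ 2 * W σ) := by
        rw [hνeq s hs, ← ENNReal.ofReal_mul (hμ0 s),
          show μ s * (2 * C / δ * Real.exp (-(δ / 2 * s)) / μ s)
            = 2 * C / δ * Real.exp (-(δ / 2 * s)) by field_simp,
          ENNReal.ofReal_mul (div_nonneg (by linarith) hδ.le), mul_assoc]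
    _ = ENNReal.ofReal (2 * C / δ) *
          ∫⁻ σ in Ioo 0 s, ν σ * ENNReal.ofReal (g σ) ^ 2 *
            ENNReal.ofReal (Real.exp (-(δ / 2 * (s - σ)))) := by
        congr 1
        rw [← lintegral_const_mul' _ _ ENNReal.ofReal_ne_top]
        apply setLIntegral_congr_fun measurableSet_Ioo
        intro σ hσ
        rw [hW]
        beta_reduce
        rw [show ENNReal.ofReal (Real.exp (-(δ / 2 * s))) *
            (ENNReal.ofReal (g σ) ^ 2 * (ν σ * ENNReal.ofReal (Real.exp (δ / 2 * σ))))
            = ν σ * ENNReal.ofReal (g σ) ^ 2 *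
              (ENNReal.ofReal (Real.exp (-(δ / 2 * s))) * ENNReal.ofReal (Real.exp (δ / 2 * σ)))
            by ring, ← ENNReal.ofReal_mul (by positivity), ← Real.exp_add]
        congr 3
        ring

lemma le_sqrt_mul_sqrt {x y z : ℝ≥0∞} (h : x ^ 2 ≤ y * z) :
    x ≤ y ^ ((1:ℝ)/2) * z ^ ((1:ℝ)/2) := by
  calc x = (x ^ 2) ^ ((1:ℝ)/2) := by
        rw [← ENNReal.rpow_natCast x 2, ← ENNReal.rpow_mul]; norm_num
    _ ≤ (y * z) ^ ((1:ℝ)/2) := ENNReal.rpow_le_rpow h (by norm_num)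
    _ = _ := ENNReal.mul_rpow_of_nonneg _ _ (by norm_num)

theorem stmt0
    (μ : ℝ → ℝ) (hμ0 : ∀ s, 0 ≤ μ s) (hmono : AntitoneOn μ (Ici 0))
    (hint : IntegrableOn μ (Ioi 0)) (m : ℝ) (hm : m = ∫ s in Ioi 0, μ s)
    (hmpos : 0 < m)
    (C δ : ℝ) (hC : 1 ≤ C) (hδ : 0 < δ)
    (hdec : ∀ σ ≥ (0:ℝ), ∀ s > (0:ℝ), μ (σ + s) ≤ C * Real.exp (-δ * σ) * μ s)
    (g : ℝ → ℝ) (hg : Measurable g) (hg0 : ∀ σ, 0 ≤ g σ) :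
    ∫⁻ s in Ioi 0, ENNReal.ofReal (μ s) * (∫⁻ σ in Ioo 0 s, ENNReal.ofReal (g σ))
      ≤ ENNReal.ofReal (Real.sqrt (4 * C * m) / δ) *
        (∫⁻ σ in Ioi 0, ENNReal.ofReal (μ σ) * ENNReal.ofReal (g σ) ^ 2) ^ ((1:ℝ)/2) := by
  have hC0 : (0:ℝ) ≤ C := by linarith
  set G : ℝ → ℝ≥0∞ := fun σ => ENNReal.ofReal (g σ) with hGdef
  have hGmeas : Measurable G := hg.ennreal_ofReal
  have hanti : Antitone (fun s => μ (max s 0)) := fun a b hab =>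
    hmono (mem_Ici.2 (le_max_right a 0)) (mem_Ici.2 (le_max_right b 0)) (max_le_max hab le_rfl)
  set ν : ℝ → ℝ≥0∞ := fun s => ENNReal.ofReal (μ (max s 0)) with hνdef
  have hνmeas : Measurable ν := hanti.measurable.ennreal_ofReal
  have hνeq : ∀ x > (0:ℝ), ν x = ENNReal.ofReal (μ x) := fun x hx => by
    simp only [hνdef]; rw [max_eq_left hx.le]
  set F : ℝ → ℝ≥0∞ := fun s => ∫⁻ σ in Ioo 0 s, G σ with hFdef
  -- measurability of F
  have hsetm : MeasurableSet {q : ℝ × ℝ | 0 < q.2 ∧ q.2 < q.1} :=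
    (measurableSet_lt measurable_const measurable_snd).inter
      (measurableSet_lt measurable_snd measurable_fst)
  have hFmeas : Measurable F := by
    have : F = fun s => ∫⁻ σ, ({q : ℝ × ℝ | 0 < q.2 ∧ q.2 < q.1}.indicator
        (fun q => G q.2) (s, σ)) := by
      funext s
      show (∫⁻ σ in Ioo 0 s, G σ) = _
      rw [← lintegral_indicator measurableSet_Ioo]
      congr 1
    rw [this]
    exact Measurable.lintegral_prod_right' ((hGmeas.comp measurable_snd).indicator hsetm)
  -- rewrite both sides with ν
  have hL : (∫⁻ s in Ioi 0, ENNReal.ofReal (μ s) * (∫⁻ σ in Ioo 0 s, ENNReal.ofReal (g σ)))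
      = ∫⁻ s in Ioi 0, ν s * F s :=
    setLIntegral_congr_fun measurableSet_Ioi (fun s hs => by rw [hνeq s hs])
  have hA : (∫⁻ σ in Ioi 0, ENNReal.ofReal (μ σ) * ENNReal.ofReal (g σ) ^ 2)
      = ∫⁻ σ in Ioi 0, ν σ * G σ ^ 2 :=
    setLIntegral_congr_fun measurableSet_Ioi (fun σ hσ => by rw [hνeq σ hσ])
  rw [hL, hA]
  set A := ∫⁻ σ in Ioi 0, ν σ * G σ ^ 2 with hAdef
  -- total mass
  have hν_int : ∫⁻ s in Ioi 0, ν s = ENNReal.ofReal m := by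
    rw [hm, ofReal_integral_eq_lintegral_ofReal hint
      ((ae_restrict_iff' measurableSet_Ioi).2 (ae_of_all _ fun s _ => hμ0 s))]
    exact setLIntegral_congr_fun measurableSet_Ioi
      (fun x hx => hνeq x hx)
  -- step 1 : Cauchy-Schwarz in s
  have hhalfmul : ∀ x : ℝ≥0∞, x ^ ((1:ℝ)/2) * x ^ ((1:ℝ)/2) = x := fun x => by
    rw [← pow_two, half_sq]
  have step1 : ∫⁻ s in Ioi 0, ν s * F s
      ≤ (ENNReal.ofReal m) ^ ((1:ℝ)/2) * (∫⁻ s in Ioi 0, ν s * F s ^ 2) ^ ((1:ℝ)/2) := by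
    have hCS := myCS (volume.restrict (Ioi 0))
      (f := fun s => ν s ^ ((1:ℝ)/2)) (h := fun s => ν s ^ ((1:ℝ)/2) * F s)
      (hνmeas.pow_const _).aemeasurable
      ((hνmeas.pow_const _).mul hFmeas).aemeasurable
    have e1 : ∀ s, ν s ^ ((1:ℝ)/2) * (ν s ^ ((1:ℝ)/2) * F s) = ν s * F s := fun s => by
      rw [← mul_assoc, hhalfmul]
    have e2 : ∀ s, (ν s ^ ((1:ℝ)/2)) ^ 2 = ν s := fun s => half_sq _
    have e3 : ∀ s, (ν s ^ ((1:ℝ)/2) * F s) ^ 2 = ν s * F s ^ 2 := fun s => by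
      rw [mul_pow, half_sq]
    simp only [e1, e2, e3] at hCS
    rw [← hν_int]
    exact le_sqrt_mul_sqrt hCS
  -- step 2 : pointwise key bound + Tonelli
  set H : ℝ × ℝ → ℝ≥0∞ := fun p =>
    {q : ℝ × ℝ | 0 < q.2 ∧ q.2 < q.1}.indicator
      (fun q => ν q.2 * G q.2 ^ 2 * ENNReal.ofReal (Real.exp (-(δ/2 * (q.1 - q.2))))) p
    with hHdef
  have hHmeas : Measurable H := by
    apply Measurable.indicator _ hsetm
    exact ((hνmeas.comp measurable_snd).mul ((hGmeas.comp measurable_snd).pow_const 2)).mul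
      ((Real.measurable_exp.comp
        (((measurable_fst.sub measurable_snd).const_mul (δ/2)).neg)).ennreal_ofReal)
  have hinner : ∀ s : ℝ,
      (∫⁻ σ in Ioo 0 s, ν σ * G σ ^ 2 * ENNReal.ofReal (Real.exp (-(δ/2 * (s - σ)))))
        = ∫⁻ σ, H (s, σ) := by
    intro s
    rw [← lintegral_indicator measurableSet_Ioo]
    congr 1
  have step2 : (∫⁻ s in Ioi 0, ν s * F s ^ 2)
      ≤ ENNReal.ofReal (2 * C / δ) * (ENNReal.ofReal (2 / δ) * A) := by
    have hkey : ∀ s ∈ Ioi (0:ℝ), ν s * F s ^ 2 ≤ ENNReal.ofReal (2 * C / δ) *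
        ∫⁻ σ in Ioo 0 s, ν σ * G σ ^ 2 * ENNReal.ofReal (Real.exp (-(δ/2 * (s - σ)))) := by
      intro s hs
      exact key_pointwise μ hμ0 C δ hδ hdec hC0 g hg ν hνmeas hνeq s hs
    calc (∫⁻ s in Ioi 0, ν s * F s ^ 2)
        ≤ ∫⁻ s in Ioi 0, ENNReal.ofReal (2 * C / δ) *
            ∫⁻ σ in Ioo 0 s, ν σ * G σ ^ 2 *
              ENNReal.ofReal (Real.exp (-(δ/2 * (s - σ)))) :=
          setLIntegral_mono' measurableSet_Ioi hkey
      _ = ENNReal.ofReal (2 * C / δ) * ∫⁻ s in Ioi 0, ∫⁻ σ, H (s, σ) := by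
          rw [lintegral_const_mul' _ _ ENNReal.ofReal_ne_top]
          congr 1
          exact setLIntegral_congr_fun measurableSet_Ioi
            (fun s _ => hinner s)
      _ = ENNReal.ofReal (2 * C / δ) * (ENNReal.ofReal (2 / δ) * A) := by
          congr 1
          -- Tonelli
          have hzero_out : ∀ s : ℝ, s ∉ Ioi (0:ℝ) → ∫⁻ σ, H (s, σ) = 0 := by
            intro s hs
            have : ∀ σ, H (s, σ) = 0 := fun σ =>
              indicator_of_notMem (fun hq => hs (mem_Ioi.2 (lt_trans hq.1 hq.2))) _
            simp [this]
          have hext : ∫⁻ s in Ioi 0, ∫⁻ σ, H (s, σ) = ∫⁻ s, ∫⁻ σ, H (s, σ) := by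
            rw [← lintegral_indicator measurableSet_Ioi]
            congr 1
            funext s
            by_cases hs : s ∈ Ioi (0:ℝ)
            · rw [indicator_of_mem hs]
            · rw [indicator_of_notMem hs, hzero_out s hs]
          rw [hext]
          have hswap : ∫⁻ s, ∫⁻ σ, H (s, σ) = ∫⁻ σ, ∫⁻ s, H (s, σ) :=
            lintegral_lintegral_swap hHmeas.aemeasurable
          rw [hswap]
          have hzero_out2 : ∀ σ : ℝ, σ ∉ Ioi (0:ℝ) → ∫⁻ s, H (s, σ) = 0 := by
            intro σ hσ
            have : ∀ s, H (s, σ) = 0 := fun s =>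
              indicator_of_notMem (fun hq => hσ (mem_Ioi.2 hq.1)) _
            simp [this]
          have hext2 : ∫⁻ σ, ∫⁻ s, H (s, σ) = ∫⁻ σ in Ioi 0, ∫⁻ s, H (s, σ) := by
            rw [← lintegral_indicator measurableSet_Ioi]
            congr 1
            funext σ
            by_cases hσ : σ ∈ Ioi (0:ℝ)
            · rw [indicator_of_mem hσ]
            · rw [indicator_of_notMem hσ, hzero_out2 σ hσ]
          rw [hext2]
          have htail : ∀ σ ∈ Ioi (0:ℝ), ∫⁻ s, H (s, σ)
              = ν σ * G σ ^ 2 * ENNReal.ofReal (2 / δ) := by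
            intro σ hσ
            have h1 : ∀ s : ℝ, H (s, σ) = (Ioi σ).indicator
                (fun s => ν σ * G σ ^ 2 *
                  ENNReal.ofReal (Real.exp (-(δ/2 * (s - σ))))) s := by
              intro s
              simp only [hHdef]
              by_cases hsσ : s ∈ Ioi σ
              · rw [indicator_of_mem hsσ, indicator_of_mem]
                exact ⟨hσ, hsσ⟩
              · rw [indicator_of_notMem hsσ, indicator_of_notMem]
                intro hq
                exact hsσ hq.2
            simp only [h1]
            rw [lintegral_indicator measurableSet_Ioi]
            have hfin : ν σ * G σ ^ 2 ≠ ⊤ := by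
              rw [hνeq σ hσ]
              exact ENNReal.mul_ne_top ENNReal.ofReal_ne_top
                (pow_ne_top ENNReal.ofReal_ne_top)
            rw [lintegral_const_mul' _ _ hfin, exp_tail (by positivity : (0:ℝ) < δ/2) σ]
            congr 2
            rw [one_div, div_eq_mul_inv]
            field_simp
          rw [setLIntegral_congr_fun measurableSet_Ioi htail,
            lintegral_mul_const' _ _ ENNReal.ofReal_ne_top, hAdef, mul_comm]
  -- combine
  calc ∫⁻ s in Ioi 0, ν s * F s
      ≤ (ENNReal.ofReal m) ^ ((1:ℝ)/2) * (∫⁻ s in Ioi 0, ν s * F s ^ 2) ^ ((1:ℝ)/2) := step1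
    _ ≤ (ENNReal.ofReal m) ^ ((1:ℝ)/2) *
        (ENNReal.ofReal (2 * C / δ) * (ENNReal.ofReal (2 / δ) * A)) ^ ((1:ℝ)/2) :=
        mul_le_mul_right (ENNReal.rpow_le_rpow step2 (by norm_num)) _
    _ = ENNReal.ofReal (Real.sqrt (4 * C * m) / δ) * A ^ ((1:ℝ)/2) := by
        rw [← mul_assoc (ENNReal.ofReal (2 * C / δ)),
          ENNReal.mul_rpow_of_nonneg _ _ (by norm_num : (0:ℝ) ≤ 1/2),
          ← mul_assoc, ← ENNReal.mul_rpow_of_nonneg _ _ (by norm_num : (0:ℝ) ≤ 1/2)]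
        congr 1
        rw [← ENNReal.ofReal_mul (div_nonneg (by linarith) hδ.le),
          ← ENNReal.ofReal_mul hmpos.le,
          ENNReal.ofReal_rpow_of_nonneg (by positivity) (by norm_num)]
        congr 1
        rw [show m * (2 * C / δ * (2 / δ)) = (4 * C * m) / δ ^ 2 by field_simp; ring,
          ← Real.sqrt_eq_rpow, Real.sqrt_div (by positivity) (δ ^ 2),
          Real.sqrt_sq hδ.le]
end

section
/- Let μ satisfy μ(σ+s) ≤ C e^{-δσ} μ(s) for all σ ≥ 0, s > 0 (with C ≥ 1, δ > 0), and let g : (0,∞) → [0,∞) be measurable. Define G(s) = ∫₀^s e^{-(δ/2)(s-σ)} √(μ(σ)) g(σ) dσ. Then ∫₀^∞ μ(s) (∫₀^s g(σ) dσ) ds ≤ √C · ∫₀^∞ √(μ(s)) G(s) ds. -/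
open MeasureTheory Set ENNReal

theorem stmt1
    (μ : ℝ → ℝ) (hμmeas : Measurable μ) (hμ0 : ∀ s, 0 ≤ μ s)
    (C δ : ℝ) (hC : 1 ≤ C) (hδ : 0 < δ)
    (hdec : ∀ σ ≥ (0:ℝ), ∀ s > (0:ℝ), μ (σ + s) ≤ C * Real.exp (-δ * σ) * μ s)
    (g : ℝ → ℝ) (hg : Measurable g) (hg0 : ∀ σ, 0 ≤ g σ)
    (G : ℝ → ℝ≥0∞)
    (hG : ∀ s, G s = ∫⁻ σ in Ioo 0 s,
        ENNReal.ofReal (Real.exp (-(δ/2) * (s - σ)) * Real.sqrt (μ σ) * g σ)) :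
    ∫⁻ s in Ioi 0, ENNReal.ofReal (μ s) * (∫⁻ σ in Ioo 0 s, ENNReal.ofReal (g σ))
      ≤ ENNReal.ofReal (Real.sqrt C) *
        ∫⁻ s in Ioi 0, ENNReal.ofReal (Real.sqrt (μ s)) * G s := by
  rw [← lintegral_const_mul' _ _ ENNReal.ofReal_ne_top]
  apply setLIntegral_mono' measurableSet_Ioi
  intro s hs
  rw [hG, ← lintegral_const_mul' _ _ ENNReal.ofReal_ne_top,
    ← lintegral_const_mul' _ _ ENNReal.ofReal_ne_top,
    ← lintegral_const_mul' _ _ ENNReal.ofReal_ne_top]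
  apply setLIntegral_mono' measurableSet_Ioo
  intro σ hσ
  rw [← ENNReal.ofReal_mul (Real.sqrt_nonneg _), ← ENNReal.ofReal_mul (hμ0 s),
    ← ENNReal.ofReal_mul (Real.sqrt_nonneg C)]
  apply ENNReal.ofReal_le_ofReal
  have h1 : μ s ≤ C * Real.exp (-δ * (s - σ)) * μ σ := by
    have := hdec (s - σ) (by linarith [hσ.2]) σ hσ.1
    simpa [show s - σ + σ = s by ring] using this
  have h2 : Real.sqrt (μ s) ≤
      Real.sqrt C * Real.exp (-(δ/2) * (s - σ)) * Real.sqrt (μ σ) := by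
    calc Real.sqrt (μ s) ≤ Real.sqrt (C * Real.exp (-δ * (s - σ)) * μ σ) :=
          Real.sqrt_le_sqrt h1
      _ = Real.sqrt C * Real.exp (-(δ/2) * (s - σ)) * Real.sqrt (μ σ) := by
          rw [Real.sqrt_mul (by positivity), Real.sqrt_mul (by positivity),
            ← Real.exp_half]
          ring_nf
  calc μ s * g σ = Real.sqrt (μ s) * Real.sqrt (μ s) * g σ := by
        rw [Real.mul_self_sqrt (hμ0 s)]
    _ ≤ Real.sqrt (μ s) * (Real.sqrt C * Real.exp (-(δ/2) * (s - σ)) *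
          Real.sqrt (μ σ)) * g σ := by
        apply mul_le_mul_of_nonneg_right _ (hg0 σ)
        exact mul_le_mul_of_nonneg_left h2 (Real.sqrt_nonneg _)
    _ = Real.sqrt C * (Real.sqrt (μ s) *
          (Real.exp (-(δ/2) * (s - σ)) * Real.sqrt (μ σ) * g σ)) := by ring
end

section
/- Let μ : (0,∞) → [0,∞) be integrable with m = ∫₀^∞ μ > 0 and satisfy μ(σ+s) ≤ C e^{-δσ} μ(s) for all σ ≥ 0, s > 0 (C ≥ 1, δ > 0). Let H be a Hilbert space and η, ξ ∈ L²_μ((0,∞); H). Then ∫₀^∞ μ(s) ‖η(s)‖ (∫₀^s ‖ξ(σ)‖ dσ) ds ≤ (2√C/δ) ‖η‖_M ‖ξ‖_M, where ‖·‖_M is the L²_μ norm. -/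
open MeasureTheory Set Real Filter
open scoped ENNReal

lemma aux_ofReal_integral_le {α : Type*} [MeasurableSpace α] (ν : Measure α) (f : α → ℝ) :
    ENNReal.ofReal (∫ x, f x ∂ν) ≤ ∫⁻ x, ENNReal.ofReal (f x) ∂ν := by
  by_cases hf : Integrable f ν
  · calc ENNReal.ofReal (∫ x, f x ∂ν) ≤ ENNReal.ofReal (∫ x, max (f x) 0 ∂ν) :=
          ENNReal.ofReal_le_ofReal (integral_mono hf hf.pos_part fun x => le_max_left _ _)
      _ = ∫⁻ x, ENNReal.ofReal (max (f x) 0) ∂ν :=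
          ofReal_integral_eq_lintegral_ofReal hf.pos_part
            (Filter.Eventually.of_forall fun x => le_max_right _ _)
      _ = ∫⁻ x, ENNReal.ofReal (f x) ∂ν := by
          congr 1; funext x
          rcases le_total 0 (f x) with h|h
          · rw [max_eq_left h]
          · rw [max_eq_right h, ENNReal.ofReal_zero, ENNReal.ofReal_eq_zero.mpr h]
  · rw [integral_undef hf]; simp

lemma aux_exp_int (c : ℝ) (hc : 0 < c) :
    ∫ u in Ioi (0:ℝ), Real.exp (-c * u) = 1 / c := by
  have h := integral_Ioi_of_hasDerivAt_of_tendsto (f := fun x => -Real.exp (-c * x) / c)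
    (f' := fun x => Real.exp (-c * x)) (a := 0) (m := 0)
    ?_ ?_ (exp_neg_integrableOn_Ioi 0 hc) ?_
  · rw [h]; simp [div_eq_mul_inv]
  · exact (((continuous_exp.comp (continuous_const.mul continuous_id)).neg.div_const c).continuousWithinAt)
  · intro x _
    have : HasDerivAt (fun x : ℝ => -Real.exp (-c * x) / c) (Real.exp (-c * x)) x := by
      have h1 : HasDerivAt (fun x : ℝ => -c * x) (-c) x := by
        simpa using (hasDerivAt_id x).const_mul (-c)
      have := (h1.exp.neg).div_const c
      refine this.congr_deriv ?_
      rw [mul_neg, neg_neg, mul_div_assoc, div_self hc.ne', mul_one]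
    exact this
  · have : Tendsto (fun x : ℝ => Real.exp (-c * x)) atTop (nhds 0) :=
      tendsto_exp_atBot.comp (tendsto_id.const_mul_atTop_of_neg (by linarith))
    simpa [div_eq_mul_inv] using (this.neg.div_const c)

lemma aux_exp_lint (c : ℝ) (hc : 0 < c) :
    ∫⁻ u in Ioi (0:ℝ), ENNReal.ofReal (Real.exp (-c * u)) = ENNReal.ofReal (1/c) := by
  rw [← ofReal_integral_eq_lintegral_ofReal (exp_neg_integrableOn_Ioi 0 hc)
    (Filter.Eventually.of_forall fun x => (Real.exp_pos _).le), aux_exp_int c hc]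

lemma aux_exp_shift (c : ℝ) (hc : 0 < c) (v : ℝ) :
    ∫⁻ s in Ici v, ENNReal.ofReal (Real.exp (-c * (s - v))) = ENNReal.ofReal (1/c) := by
  have hmp : MeasurePreserving (fun x : ℝ => x - v) volume volume :=
    measurePreserving_sub_right volume v
  have hemb : MeasurableEmbedding (fun x : ℝ => x - v) :=
    (MeasurableEquiv.subRight v).measurableEmbedding
  have h := hmp.setLIntegral_comp_emb hemb
    (fun u => ENNReal.ofReal (Real.exp (-c * u))) (Ici v)
  have him : (fun x : ℝ => x - v) '' (Ici v) = Ici 0 := by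
    ext x
    simp only [mem_image, mem_Ici]
    constructor
    · rintro ⟨y, hy, rfl⟩; linarith
    · intro hx; exact ⟨x + v, by linarith, by ring⟩
  rw [him] at h
  rw [h, setLIntegral_congr (Ioi_ae_eq_Ici (a := (0:ℝ))).symm, aux_exp_lint c hc]

lemma aux_exp_refl (c : ℝ) (hc : 0 < c) (v : ℝ) :
    ∫⁻ s in Iic v, ENNReal.ofReal (Real.exp (-c * (v - s))) = ENNReal.ofReal (1/c) := by
  have hmp : MeasurePreserving (fun x : ℝ => v - x) volume volume := by
    have := (measurePreserving_add_left (volume : Measure ℝ) v).comp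
      (Measure.measurePreserving_neg (volume : Measure ℝ))
    simpa [Function.comp_def, sub_eq_add_neg] using this
  have hemb : MeasurableEmbedding (fun x : ℝ => v - x) :=
    (MeasurableEquiv.subLeft v).measurableEmbedding
  have h := hmp.setLIntegral_comp_emb hemb
    (fun u => ENNReal.ofReal (Real.exp (-c * u))) (Iic v)
  have him : (fun x : ℝ => v - x) '' (Iic v) = Ici 0 := by
    ext x
    simp only [mem_image, mem_Iic, mem_Ici]
    constructor
    · rintro ⟨y, hy, rfl⟩; linarith
    · intro hx; exact ⟨v - x, by linarith, by ring⟩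
  rw [him] at h
  rw [h, setLIntegral_congr (Ioi_ae_eq_Ici (a := (0:ℝ))).symm, aux_exp_lint c hc]

lemma aux_amgm (t x y : ℝ) (ht : 0 < t) :
    x * y ≤ t/2 * x^2 + 1/(2*t) * y^2 := by
  have key : 2*t*(x*y) ≤ t^2*x^2 + y^2 := by nlinarith [sq_nonneg (t*x - y)]
  have h2t : (0:ℝ) < 2*t := by linarith
  calc x*y = (2*t*(x*y))/(2*t) := by field_simp
    _ ≤ (t^2*x^2 + y^2)/(2*t) := by gcongr
    _ = t/2 * x^2 + 1/(2*t) * y^2 := by field_simp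
    
lemma aux_opt (K a b I : ℝ) (hK : 0 < K) (ha : 0 ≤ a) (hb : 0 ≤ b)
    (h : ∀ t > 0, I ≤ K * (t * a + b / t)) :
    I ≤ 2 * K * Real.sqrt a * Real.sqrt b := by
  rcases ha.eq_or_lt with ha0 | hapos
  · have : I ≤ 0 := by
      apply le_of_forall_pos_le_add
      intro ε hε
      have htpos : (0:ℝ) < max 1 (K*b/ε) := lt_max_of_lt_left one_pos
      have h1 := h _ htpos
      rw [← ha0] at h1
      have h2 : K * b / max 1 (K*b/ε) ≤ ε := by
        rw [div_le_iff₀ htpos]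
        calc K * b = (K*b/ε) * ε := by field_simp
          _ ≤ max 1 (K*b/ε) * ε := by gcongr; exact le_max_right _ _
          _ = ε * max 1 (K*b/ε) := by ring
      calc I ≤ K * (max 1 (K*b/ε) * 0 + b / max 1 (K*b/ε)) := h1
        _ = K * b / max 1 (K*b/ε) := by ring
        _ ≤ ε := h2
        _ ≤ 0 + ε := by linarith
    calc I ≤ 0 := this
      _ ≤ 2 * K * Real.sqrt a * Real.sqrt b := by positivity
  rcases hb.eq_or_lt with hb0 | hbpos
  · have : I ≤ 0 := by
      apply le_of_forall_pos_le_add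
      intro ε hε
      have htpos : (0:ℝ) < ε / (K * a) := by positivity
      have h1 := h _ htpos
      rw [← hb0] at h1
      calc I ≤ K * (ε/(K*a) * a + 0 / (ε/(K*a))) := h1
        _ = ε := by field_simp; ring
        _ ≤ 0 + ε := by linarith
    calc I ≤ 0 := this
      _ ≤ 2 * K * Real.sqrt a * Real.sqrt b := by positivity
  · have hsa : (0:ℝ) < Real.sqrt a := Real.sqrt_pos.mpr hapos
    have hsb : (0:ℝ) < Real.sqrt b := Real.sqrt_pos.mpr hbpos
    have h1 := h (Real.sqrt b / Real.sqrt a) (by positivity)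
    have hsa2 : Real.sqrt a * Real.sqrt a = a := Real.mul_self_sqrt ha
    have hsb2 : Real.sqrt b * Real.sqrt b = b := Real.mul_self_sqrt hb
    calc I ≤ K * (Real.sqrt b / Real.sqrt a * a + b / (Real.sqrt b / Real.sqrt a)) := h1
      _ = 2 * K * Real.sqrt a * Real.sqrt b := by
          have e1 : Real.sqrt b / Real.sqrt a * a = Real.sqrt a * Real.sqrt b := by
            field_simp; linear_combination (-1) * hsa2
          have e2 : b / (Real.sqrt b / Real.sqrt a) = Real.sqrt a * Real.sqrt b := by
            field_simp; linear_combination (-1) * hsb2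
          rw [e1, e2]; ring

theorem stmt13
    {H : Type*} [NormedAddCommGroup H]
    (μ : ℝ → ℝ) (hμ0 : ∀ s, 0 ≤ μ s) (hint : IntegrableOn μ (Ioi 0))
    (m : ℝ) (hm : m = ∫ s in Ioi 0, μ s) (hmpos : 0 < m)
    (C δ : ℝ) (hC : 1 ≤ C) (hδ : 0 < δ)
    (hdec : ∀ σ ≥ (0:ℝ), ∀ s > (0:ℝ), μ (σ + s) ≤ C * Real.exp (-δ * σ) * μ s)
    (η ξ : ℝ → H)
    (hηmeas : AEStronglyMeasurable η (volume.restrict (Ioi 0)))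
    (hξmeas : AEStronglyMeasurable ξ (volume.restrict (Ioi 0)))
    (hη2 : IntegrableOn (fun s => μ s * ‖η s‖ ^ 2) (Ioi 0))
    (hξ2 : IntegrableOn (fun s => μ s * ‖ξ s‖ ^ 2) (Ioi 0)) :
    ∫ s in Ioi 0, μ s * ‖η s‖ * (∫ σ in (0:ℝ)..s, ‖ξ σ‖)
      ≤ (2 * Real.sqrt C / δ) * Real.sqrt (∫ s in Ioi 0, μ s * ‖η s‖ ^ 2)
          * Real.sqrt (∫ s in Ioi 0, μ s * ‖ξ s‖ ^ 2) := by
  classical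
  set ν : Measure ℝ := volume.restrict (Ioi 0) with hν
  set P : ℝ → ℝ := fun s => μ s * ‖η s‖ ^ 2 with hP
  set Q : ℝ → ℝ := fun s => μ s * ‖ξ s‖ ^ 2 with hQ
  set a : ℝ := ∫ s in Ioi 0, μ s * ‖η s‖ ^ 2 with haRhs
  set b : ℝ := ∫ s in Ioi 0, μ s * ‖ξ s‖ ^ 2 with hbRhs
  have hCpos : (0:ℝ) < C := lt_of_lt_of_le one_pos hC
  have hsC : (0:ℝ) < Real.sqrt C := Real.sqrt_pos.mpr hCpos
  have ha0 : 0 ≤ a :=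
    setIntegral_nonneg measurableSet_Ioi fun s _ =>
      mul_nonneg (hμ0 s) (pow_nonneg (norm_nonneg _) 2)
  have hb0 : 0 ≤ b :=
    setIntegral_nonneg measurableSet_Ioi fun s _ =>
      mul_nonneg (hμ0 s) (pow_nonneg (norm_nonneg _) 2)
  have hRHS0 : 0 ≤ 2 * Real.sqrt C / δ * Real.sqrt a * Real.sqrt b :=
    mul_nonneg (mul_nonneg (div_nonneg (by positivity) hδ.le) (Real.sqrt_nonneg _))
      (Real.sqrt_nonneg _)
  set F : ℝ → ℝ := fun s => μ s * ‖η s‖ * (∫ σ in (0:ℝ)..s, ‖ξ σ‖) with hF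
  by_cases hI : IntegrableOn F (Ioi 0)
  swap
  · rw [show (∫ s in Ioi (0:ℝ), μ s * ‖η s‖ * (∫ σ in (0:ℝ)..s, ‖ξ σ‖)) = ∫ s in Ioi (0:ℝ), F s
      from rfl, integral_undef hI]
    exact hRHS0
  have hFnn : ∀ s ∈ Ioi (0:ℝ), 0 ≤ F s := by
    intro s hs
    exact mul_nonneg (mul_nonneg (hμ0 s) (norm_nonneg _))
      (intervalIntegral.integral_nonneg (le_of_lt hs) fun u _ => norm_nonneg _)
  have hEq : ∫ s in Ioi (0:ℝ), F s = (∫⁻ s, ENNReal.ofReal (F s) ∂ν).toReal := by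
    rw [integral_eq_lintegral_of_nonneg_ae
      ((ae_restrict_iff' measurableSet_Ioi).mpr (Filter.Eventually.of_forall hFnn)) hI.1]
  set L : ℝ≥0∞ := ∫⁻ s, ENNReal.ofReal (F s) ∂ν with hL
  -- the key bound
  have hP0 : ∀ x, 0 ≤ P x := fun x => mul_nonneg (hμ0 x) (pow_nonneg (norm_nonneg _) 2)
  have hQ0 : ∀ x, 0 ≤ Q x := fun x => mul_nonneg (hμ0 x) (pow_nonneg (norm_nonneg _) 2)
  have hhalf : (0:ℝ) < δ/2 := by linarith
  have h2δ : ENNReal.ofReal ((1:ℝ)/(δ/2)) = ENNReal.ofReal (2/δ) := by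
    rw [one_div_div]
  have claim : ∀ t : ℝ, 0 < t → L ≤ ENNReal.ofReal (Real.sqrt C / δ * (t * a + b / t)) := by
    intro t ht
    set KE : ℝ → ℝ → ℝ≥0∞ := fun s σ => ENNReal.ofReal (Real.exp (-(δ/2) * (s - σ))) with hKE
    set c2 : ℝ≥0∞ := ENNReal.ofReal (Real.sqrt C / (2*t)) with hc2
    set D : ℝ → ℝ≥0∞ := fun s => ∫⁻ σ in Ioc 0 s, KE s σ * (c2 * ENNReal.ofReal (Q σ)) with hD
    set c1 : ℝ := Real.sqrt C * t / δ with hc1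
    have hc10 : 0 ≤ c1 := by positivity
    have hKEmeas : ∀ s, Measurable (fun σ => KE s σ) := by
      intro s
      exact ((Real.continuous_exp.comp
        (continuous_const.mul (continuous_const.sub continuous_id))).measurable).ennreal_ofReal
    have hiic : ∀ s : ℝ, (∫⁻ σ in Iic s, KE s σ) = ENNReal.ofReal (2/δ) := by
      intro s
      simp only [hKE]
      rw [aux_exp_refl (δ/2) hhalf s, h2δ]
    have hici : ∀ σ : ℝ, (∫⁻ s in Ici σ, KE s σ) = ENNReal.ofReal (2/δ) := by
      intro σ
      simp only [hKE]
      rw [aux_exp_shift (δ/2) hhalf σ, h2δ]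
    -- pointwise real estimate
    have hreal : ∀ s, ∀ σ ∈ Ioc (0:ℝ) s,
        μ s * ‖η s‖ * ‖ξ σ‖ ≤ Real.sqrt C * (t/2) * P s * Real.exp (-(δ/2)*(s-σ))
          + Real.sqrt C / (2*t) * Q σ * Real.exp (-(δ/2)*(s-σ)) := by
      intro s σ hσ
      obtain ⟨hσ0, hσs⟩ := hσ
      have hd := hdec (s-σ) (by linarith) σ hσ0
      rw [sub_add_cancel] at hd
      set e : ℝ := Real.exp (-(δ/2)*(s-σ)) with he
      have he0 : (0:ℝ) < e := Real.exp_pos _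
      have hexp : Real.exp (-δ*(s-σ)) = e * e := by
        rw [he, ← Real.exp_add]; congr 1; ring
      have hsq : Real.sqrt (μ s) ≤ Real.sqrt C * e * Real.sqrt (μ σ) := by
        have h1 : Real.sqrt (μ s) ≤ Real.sqrt (C * Real.exp (-δ*(s-σ)) * μ σ) :=
          Real.sqrt_le_sqrt hd
        rwa [hexp, Real.sqrt_mul (by positivity) (μ σ), Real.sqrt_mul hCpos.le,
          Real.sqrt_mul_self he0.le] at h1
      have hx2 : (Real.sqrt (μ s) * ‖η s‖)^2 = P s := by
        rw [mul_pow, Real.sq_sqrt (hμ0 s)]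
      have hy2 : (Real.sqrt (μ σ) * ‖ξ σ‖)^2 = Q σ := by
        rw [mul_pow, Real.sq_sqrt (hμ0 σ)]
      have hamgm := aux_amgm t (Real.sqrt (μ s) * ‖η s‖) (Real.sqrt (μ σ) * ‖ξ σ‖) ht
      rw [hx2, hy2] at hamgm
      calc μ s * ‖η s‖ * ‖ξ σ‖
          = (Real.sqrt (μ s) * ‖η s‖) * (Real.sqrt (μ s) * ‖ξ σ‖) := by
            linear_combination (‖η s‖ * ‖ξ σ‖) * (Real.mul_self_sqrt (hμ0 s)).symm
        _ ≤ (Real.sqrt (μ s) * ‖η s‖) * ((Real.sqrt C * e * Real.sqrt (μ σ)) * ‖ξ σ‖) :=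
            mul_le_mul_of_nonneg_left (mul_le_mul_of_nonneg_right hsq (norm_nonneg _))
              (mul_nonneg (Real.sqrt_nonneg _) (norm_nonneg _))
        _ = (Real.sqrt C * e) * ((Real.sqrt (μ s) * ‖η s‖) * (Real.sqrt (μ σ) * ‖ξ σ‖)) := by
            ring
        _ ≤ (Real.sqrt C * e) * (t/2 * P s + 1/(2*t) * Q σ) :=
            mul_le_mul_of_nonneg_left hamgm (mul_nonneg (Real.sqrt_nonneg _) he0.le)
        _ = Real.sqrt C * (t/2) * P s * e + Real.sqrt C / (2*t) * Q σ * e := by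
            field_simp
    -- pointwise lintegral estimate
    have hpt : ∀ s ∈ Ioi (0:ℝ),
        ENNReal.ofReal (F s) ≤ ENNReal.ofReal (c1 * P s) + D s := by
      intro s hs
      have step1 : ENNReal.ofReal (F s)
          ≤ ∫⁻ σ in Ioc 0 s, ENNReal.ofReal (μ s * ‖η s‖ * ‖ξ σ‖) := by
        have hIoc : (∫ σ in (0:ℝ)..s, ‖ξ σ‖) = ∫ σ in Ioc (0:ℝ) s, ‖ξ σ‖ :=
          intervalIntegral.integral_of_le (le_of_lt hs)
        have h1 : ENNReal.ofReal (F s)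
            = ENNReal.ofReal (μ s * ‖η s‖) * ENNReal.ofReal (∫ σ in Ioc (0:ℝ) s, ‖ξ σ‖) := by
          rw [hF]
          simp only
          rw [hIoc, ENNReal.ofReal_mul (mul_nonneg (hμ0 s) (norm_nonneg _))]
        rw [h1]
        calc ENNReal.ofReal (μ s * ‖η s‖) * ENNReal.ofReal (∫ σ in Ioc (0:ℝ) s, ‖ξ σ‖)
            ≤ ENNReal.ofReal (μ s * ‖η s‖) * ∫⁻ σ in Ioc 0 s, ENNReal.ofReal ‖ξ σ‖ :=
              mul_le_mul_right (aux_ofReal_integral_le _ _) _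
          _ = ∫⁻ σ in Ioc 0 s, ENNReal.ofReal (μ s * ‖η s‖) * ENNReal.ofReal ‖ξ σ‖ :=
              (lintegral_const_mul' _ _ ENNReal.ofReal_ne_top).symm
          _ = ∫⁻ σ in Ioc 0 s, ENNReal.ofReal (μ s * ‖η s‖ * ‖ξ σ‖) := by
              apply lintegral_congr
              intro σ
              rw [← ENNReal.ofReal_mul (mul_nonneg (hμ0 s) (norm_nonneg _))]
      have step2 : (∫⁻ σ in Ioc 0 s, ENNReal.ofReal (μ s * ‖η s‖ * ‖ξ σ‖))
          ≤ ∫⁻ σ in Ioc 0 s, (ENNReal.ofReal (Real.sqrt C * (t/2) * P s) * KE s σ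
              + KE s σ * (c2 * ENNReal.ofReal (Q σ))) := by
        apply lintegral_mono_ae
        rw [ae_restrict_iff' measurableSet_Ioc]
        apply Filter.Eventually.of_forall
        intro σ hσ
        calc ENNReal.ofReal (μ s * ‖η s‖ * ‖ξ σ‖)
            ≤ ENNReal.ofReal (Real.sqrt C * (t/2) * P s * Real.exp (-(δ/2)*(s-σ))
                + Real.sqrt C / (2*t) * Q σ * Real.exp (-(δ/2)*(s-σ))) :=
              ENNReal.ofReal_le_ofReal (hreal s σ hσ)
          _ = ENNReal.ofReal (Real.sqrt C * (t/2) * P s * Real.exp (-(δ/2)*(s-σ)))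
              + ENNReal.ofReal (Real.sqrt C / (2*t) * Q σ * Real.exp (-(δ/2)*(s-σ))) := by
              rw [ENNReal.ofReal_add
                (mul_nonneg (mul_nonneg (by positivity) (hP0 s)) (Real.exp_nonneg _))
                (mul_nonneg (mul_nonneg (by positivity) (hQ0 σ)) (Real.exp_nonneg _))]
          _ = ENNReal.ofReal (Real.sqrt C * (t/2) * P s) * KE s σ
              + KE s σ * (c2 * ENNReal.ofReal (Q σ)) := by
              simp only [hKE, hc2]
              congr 1
              · rw [← ENNReal.ofReal_mul (mul_nonneg (by positivity) (hP0 s))]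
              · rw [← ENNReal.ofReal_mul (by positivity),
                  ← ENNReal.ofReal_mul (Real.exp_nonneg _)]
                congr 1
                ring
      have step3 : (∫⁻ σ in Ioc 0 s, (ENNReal.ofReal (Real.sqrt C * (t/2) * P s) * KE s σ
              + KE s σ * (c2 * ENNReal.ofReal (Q σ))))
          = ENNReal.ofReal (Real.sqrt C * (t/2) * P s) * (∫⁻ σ in Ioc 0 s, KE s σ) + D s := by
        rw [lintegral_add_left ((hKEmeas s).const_mul _)]
        rw [lintegral_const_mul' _ _ ENNReal.ofReal_ne_top]
      have step4 : ENNReal.ofReal (Real.sqrt C * (t/2) * P s) * (∫⁻ σ in Ioc 0 s, KE s σ)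
          ≤ ENNReal.ofReal (c1 * P s) := by
        calc ENNReal.ofReal (Real.sqrt C * (t/2) * P s) * (∫⁻ σ in Ioc 0 s, KE s σ)
            ≤ ENNReal.ofReal (Real.sqrt C * (t/2) * P s) * (∫⁻ σ in Iic s, KE s σ) := by
              apply mul_le_mul_right
              exact lintegral_mono' (Measure.restrict_mono Ioc_subset_Iic_self le_rfl) le_rfl
          _ = ENNReal.ofReal (Real.sqrt C * (t/2) * P s) * ENNReal.ofReal (2/δ) := by
              rw [hiic s]
          _ = ENNReal.ofReal (c1 * P s) := by
              rw [← ENNReal.ofReal_mul (mul_nonneg (by positivity) (hP0 s))]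
              congr 1
              rw [hc1]
              field_simp
      refine (step1.trans step2).trans ?_
      rw [step3]
      exact add_le_add step4 le_rfl
    -- integrate the pointwise bound
    have hmeasA : AEMeasurable (fun s => ENNReal.ofReal (c1 * P s)) ν :=
      (aemeasurable_const.mul hη2.1.aemeasurable).ennreal_ofReal
    have hstep5 : L ≤ ENNReal.ofReal (c1 * a) + ∫⁻ s, D s ∂ν := by
      calc L ≤ ∫⁻ s, (ENNReal.ofReal (c1 * P s) + D s) ∂ν := by
            apply lintegral_mono_ae
            rw [hν, ae_restrict_iff' measurableSet_Ioi]
            exact Filter.Eventually.of_forall hpt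
        _ = (∫⁻ s, ENNReal.ofReal (c1 * P s) ∂ν) + ∫⁻ s, D s ∂ν :=
            lintegral_add_left' hmeasA _
        _ = ENNReal.ofReal (c1 * a) + ∫⁻ s, D s ∂ν := by
            congr 1
            calc (∫⁻ s, ENNReal.ofReal (c1 * P s) ∂ν)
                = ∫⁻ s, ENNReal.ofReal c1 * ENNReal.ofReal (P s) ∂ν := by
                  apply lintegral_congr
                  intro s
                  rw [ENNReal.ofReal_mul hc10]
              _ = ENNReal.ofReal c1 * ∫⁻ s, ENNReal.ofReal (P s) ∂ν :=
                  lintegral_const_mul' _ _ ENNReal.ofReal_ne_top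
              _ = ENNReal.ofReal c1 * ENNReal.ofReal a := by
                  rw [← ofReal_integral_eq_lintegral_ofReal hη2
                    (Filter.Eventually.of_forall hP0)]
              _ = ENNReal.ofReal (c1 * a) := (ENNReal.ofReal_mul hc10).symm
    -- the swap bound for ∫⁻ D
    have hDbound : (∫⁻ s, D s ∂ν) ≤ ENNReal.ofReal (2/δ) * (c2 * ENNReal.ofReal b) := by
      have hQae : AEMeasurable Q ν := hξ2.1.aemeasurable
      set W : ℝ × ℝ → ℝ≥0∞ := fun p =>
        (if p.2 ≤ p.1 then ENNReal.ofReal (Real.exp (-(δ/2) * (p.1 - p.2))) else 0)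
          * (c2 * ENNReal.ofReal (Q p.2)) with hW
      have hDW : ∀ s, D s = ∫⁻ σ, W (s, σ) ∂ν := by
        intro s
        have hset : Iic s ∩ Ioi (0:ℝ) = Ioc 0 s := by
          ext x
          simp only [mem_inter_iff, mem_Iic, mem_Ioi, mem_Ioc]
          tauto
        have h1 : D s = ∫⁻ σ in Iic s, KE s σ * (c2 * ENNReal.ofReal (Q σ)) ∂ν := by
          simp only [hD]
          rw [hν, Measure.restrict_restrict measurableSet_Iic, hset]
        rw [h1, ← lintegral_indicator measurableSet_Iic _]
        apply lintegral_congr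
        intro σ
        by_cases hσ : σ ≤ s
        · simp only [indicator_of_mem (mem_Iic.mpr hσ), hW, hKE, if_pos hσ]
        · simp only [indicator_of_notMem (fun h => hσ (mem_Iic.mp h)), hW, if_neg hσ, zero_mul]
      have hWmeas : AEMeasurable W (ν.prod ν) := by
        apply AEMeasurable.mul
        · apply Measurable.aemeasurable
          apply Measurable.ite (measurableSet_le measurable_snd measurable_fst)
          · exact ((Real.continuous_exp.comp
              (continuous_const.mul (continuous_fst.sub continuous_snd))).measurable).ennreal_ofReal
          · exact measurable_const
        · exact aemeasurable_const.mul (hQae.ennreal_ofReal.comp_snd)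
      have hswap : (∫⁻ s, ∫⁻ σ, W (s, σ) ∂ν ∂ν) = ∫⁻ σ, ∫⁻ s, W (s, σ) ∂ν ∂ν := by
        apply lintegral_lintegral_swap
        have huncurry : Function.uncurry (fun s σ => W (s, σ)) = W := by
          funext p
          simp [Function.uncurry]
        rw [huncurry]
        exact hWmeas
      have hinner : ∀ σ ∈ Ioi (0:ℝ),
          (∫⁻ s, W (s, σ) ∂ν) = ENNReal.ofReal (2/δ) * (c2 * ENNReal.ofReal (Q σ)) := by
        intro σ hσ
        have h1 : ∀ s, W (s, σ)
            = (Ici σ).indicator (fun s => KE s σ) s * (c2 * ENNReal.ofReal (Q σ)) := by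
          intro s
          by_cases hs' : σ ≤ s
          · simp only [hW, hKE, if_pos hs', indicator_of_mem (mem_Ici.mpr hs')]
          · simp only [hW, if_neg hs',
              indicator_of_notMem (fun h => hs' (mem_Ici.mp h)), zero_mul]
        calc (∫⁻ s, W (s, σ) ∂ν)
            = ∫⁻ s, (Ici σ).indicator (fun s => KE s σ) s * (c2 * ENNReal.ofReal (Q σ)) ∂ν :=
              lintegral_congr h1
          _ = (∫⁻ s, (Ici σ).indicator (fun s => KE s σ) s ∂ν) * (c2 * ENNReal.ofReal (Q σ)) :=
              lintegral_mul_const' _ _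
                (ENNReal.mul_ne_top ENNReal.ofReal_ne_top ENNReal.ofReal_ne_top)
          _ = (∫⁻ s in Ici σ, KE s σ ∂ν) * (c2 * ENNReal.ofReal (Q σ)) := by
              rw [lintegral_indicator measurableSet_Ici _]
          _ = ENNReal.ofReal (2/δ) * (c2 * ENNReal.ofReal (Q σ)) := by
              rw [hν, Measure.restrict_restrict measurableSet_Ici,
                show Ici σ ∩ Ioi (0:ℝ) = Ici σ from
                  inter_eq_left.mpr (fun x hx => mem_Ioi.mpr (lt_of_lt_of_le (mem_Ioi.mp hσ) (mem_Ici.mp hx))), hici σ]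
      calc (∫⁻ s, D s ∂ν) = ∫⁻ s, ∫⁻ σ, W (s, σ) ∂ν ∂ν := lintegral_congr hDW
        _ = ∫⁻ σ, ∫⁻ s, W (s, σ) ∂ν ∂ν := hswap
        _ = ∫⁻ σ, ENNReal.ofReal (2/δ) * (c2 * ENNReal.ofReal (Q σ)) ∂ν := by
            apply lintegral_congr_ae
            rw [Filter.EventuallyEq, hν, ae_restrict_iff' measurableSet_Ioi]
            exact Filter.Eventually.of_forall hinner
        _ = (ENNReal.ofReal (2/δ) * c2) * ∫⁻ σ, ENNReal.ofReal (Q σ) ∂ν := by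
            rw [← lintegral_const_mul' _ _
              (ENNReal.mul_ne_top ENNReal.ofReal_ne_top ENNReal.ofReal_ne_top)]
            apply lintegral_congr
            intro σ
            rw [mul_assoc]
        _ = (ENNReal.ofReal (2/δ) * c2) * ENNReal.ofReal b := by
            rw [← ofReal_integral_eq_lintegral_ofReal hξ2 (Filter.Eventually.of_forall hQ0)]
        _ = ENNReal.ofReal (2/δ) * (c2 * ENNReal.ofReal b) := by
            rw [mul_assoc]
        _ ≤ ENNReal.ofReal (2/δ) * (c2 * ENNReal.ofReal b) := le_rfl
    calc L ≤ ENNReal.ofReal (c1 * a) + ∫⁻ s, D s ∂ν := hstep5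
      _ ≤ ENNReal.ofReal (c1 * a) + ENNReal.ofReal (2/δ) * (c2 * ENNReal.ofReal b) :=
          add_le_add le_rfl hDbound
      _ = ENNReal.ofReal (c1 * a) + ENNReal.ofReal (2/δ * (Real.sqrt C / (2*t) * b)) := by
          rw [hc2, ← ENNReal.ofReal_mul (by positivity), ← ENNReal.ofReal_mul (by positivity)]
      _ = ENNReal.ofReal (c1 * a + 2/δ * (Real.sqrt C / (2*t) * b)) := by
          rw [← ENNReal.ofReal_add (mul_nonneg hc10 ha0)
            (mul_nonneg (by positivity) (mul_nonneg (by positivity) hb0))]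
      _ = ENNReal.ofReal (Real.sqrt C / δ * (t * a + b / t)) := by
          congr 1
          rw [hc1]
          field_simp
  -- conclude
  have key : ∀ t > (0:ℝ), (∫ s in Ioi (0:ℝ), F s) ≤ Real.sqrt C / δ * (t * a + b / t) := by
    intro t ht
    rw [hEq]
    have h1 := ENNReal.toReal_mono (by simp) (claim t ht)
    rwa [ENNReal.toReal_ofReal (by positivity)] at h1
  have := aux_opt (Real.sqrt C / δ) a b (∫ s in Ioi (0:ℝ), F s) (div_pos hsC hδ) ha0 hb0 key
  calc ∫ s in Ioi (0:ℝ), μ s * ‖η s‖ * (∫ σ in (0:ℝ)..s, ‖ξ σ‖) = ∫ s in Ioi (0:ℝ), F s := rfl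
    _ ≤ 2 * (Real.sqrt C / δ) * Real.sqrt a * Real.sqrt b := this
    _ = 2 * Real.sqrt C / δ * Real.sqrt a * Real.sqrt b := by ring
end

section
/- Let Σ(t) be the right-translation semigroup on M = L²_μ((0,∞); V) (V a normed space), defined by [Σ(t)η](s) = 0 for s ≤ t and η(s-t) for s > t. Suppose there exist K ≥ 1, ω > 0 such that ‖Σ(t)η‖_M ≤ K e^{-ωt} ‖η‖_M for all η and t. Then, taking η = 𝟙_{(s₀, s₀+h)} v with ‖v‖ = 1, one deduces: for a.e. s₀ > 0 and every t ≥ 0, μ(t + s₀) ≤ K² e^{-2ωt} μ(s₀) holds in the averaged sense ∫_{s₀+t}^{s₀+t+h} μ ≤ K² e^{-2ωt} ∫_{s₀}^{s₀+h} μ for all h > 0. -/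
open MeasureTheory Set

theorem stmt14
    {V : Type*} [NormedAddCommGroup V]
    (μ : ℝ → ℝ) (hμ0 : ∀ s, 0 ≤ μ s) (hmono : AntitoneOn μ (Ioi 0))
    (hint : IntegrableOn μ (Ioi 0))
    (v : V) (hv : ‖v‖ = 1)
    (K ω : ℝ) (hK : 1 ≤ K) (hω : 0 < ω)
    (hstab : ∀ (η : ℝ → V), ∀ t ≥ (0:ℝ),
      ∫ s in Ioi 0, μ s * ‖if s ≤ t then (0:V) else η (s - t)‖ ^ 2
        ≤ (K * Real.exp (-ω * t)) ^ 2 * ∫ s in Ioi 0, μ s * ‖η s‖ ^ 2) :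
    ∀ s₀ > (0:ℝ), ∀ t ≥ (0:ℝ), ∀ h > (0:ℝ),
      ∫ s in Ioc (s₀ + t) (s₀ + t + h), μ s
        ≤ K ^ 2 * Real.exp (-2 * ω * t) * ∫ s in Ioc s₀ (s₀ + h), μ s := by
  intro s₀ hs₀ t ht h hh
  have key := hstab (fun s => if s ∈ Ioc s₀ (s₀ + h) then v else 0) t ht
  have e1 : ∀ s, μ s * ‖(if s ∈ Ioc s₀ (s₀ + h) then v else (0:V))‖ ^ 2
      = (Ioc s₀ (s₀ + h)).indicator μ s := by
    intro s
    by_cases hs : s ∈ Ioc s₀ (s₀ + h) <;>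
      simp [hs, hv, indicator_of_mem, indicator_of_notMem]
  have e2 : ∀ s, μ s * ‖(if s ≤ t then (0:V)
        else if (s - t) ∈ Ioc s₀ (s₀ + h) then v else 0)‖ ^ 2
      = (Ioc (s₀ + t) (s₀ + t + h)).indicator μ s := by
    intro s
    by_cases h1 : s ≤ t
    · have hnm : s ∉ Ioc (s₀ + t) (s₀ + t + h) := by
        intro hmem; have := hmem.1; linarith
      simp [h1, indicator_of_notMem hnm]
    · have hiff : (s - t) ∈ Ioc s₀ (s₀ + h) ↔ s ∈ Ioc (s₀ + t) (s₀ + t + h) := by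
        simp only [mem_Ioc]
        constructor <;> intro hm <;> exact ⟨by linarith [hm.1], by linarith [hm.2]⟩
      by_cases h2 : (s - t) ∈ Ioc s₀ (s₀ + h)
      · simp [h1, h2, hv, indicator_of_mem (hiff.mp h2)]
      · simp [h1, h2, indicator_of_notMem (fun hm => h2 (hiff.mpr hm))]
    -- done
  simp only [e1, e2] at key
  rw [setIntegral_indicator measurableSet_Ioc, setIntegral_indicator measurableSet_Ioc] at key
  have i1 : Ioi 0 ∩ Ioc (s₀ + t) (s₀ + t + h) = Ioc (s₀ + t) (s₀ + t + h) := by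
    apply inter_eq_right.mpr
    intro x hx; exact lt_trans (by linarith) hx.1
  have i2 : Ioi 0 ∩ Ioc s₀ (s₀ + h) = Ioc s₀ (s₀ + h) := by
    apply inter_eq_right.mpr
    intro x hx; exact lt_trans hs₀ hx.1
  rw [i1, i2] at key
  have eexp : (K * Real.exp (-ω * t)) ^ 2 = K ^ 2 * Real.exp (-2 * ω * t) := by
    rw [mul_pow, ← Real.exp_nat_mul]
    ring_nf
  rw [eexp] at key
  exact key
end

section
/- Let μ be nonnegative, nonincreasing and integrable on (0,∞). If for all h > 0, t ≥ 0, s₀ > 0 one has ∫_{s₀+t}^{s₀+t+h} μ(s) ds ≤ K² e^{-2ωt} ∫_{s₀}^{s₀+h} μ(s) ds (K ≥ 1, ω > 0), then there exist C ≥ 1 and δ > 0 such that μ(σ+s) ≤ C e^{-δσ} μ(s) for all σ ≥ 0 and s > 0. -/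
open MeasureTheory Set

theorem stmt15
    (μ : ℝ → ℝ) (hμ0 : ∀ s, 0 ≤ μ s) (hmono : AntitoneOn μ (Ioi 0))
    (hint : IntegrableOn μ (Ioi 0))
    (K ω : ℝ) (hK : 1 ≤ K) (hω : 0 < ω)
    (havg : ∀ h > (0:ℝ), ∀ t ≥ (0:ℝ), ∀ s₀ > (0:ℝ),
      ∫ s in Ioc (s₀ + t) (s₀ + t + h), μ s
        ≤ K ^ 2 * Real.exp (-2 * ω * t) * ∫ s in Ioc s₀ (s₀ + h), μ s) :
    ∃ C ≥ (1:ℝ), ∃ δ > (0:ℝ), ∀ σ ≥ (0:ℝ), ∀ s > (0:ℝ),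
      μ (σ + s) ≤ C * Real.exp (-δ * σ) * μ s := by
  have hK2 : (1:ℝ) ≤ K ^ 2 := one_le_pow₀ hK
  have hE1 : (1:ℝ) ≤ Real.exp (2 * ω) := Real.one_le_exp (by linarith)
  refine ⟨K ^ 2 * Real.exp (2 * ω), by nlinarith, 2 * ω, by linarith, ?_⟩
  intro σ hσ s hs
  rcases eq_or_lt_of_le hσ with h0 | hσpos
  · rw [← h0]
    simp only [mul_zero, Real.exp_zero, zero_add, mul_one]
    have h1 : (1:ℝ) ≤ K ^ 2 * Real.exp (2 * ω) := by nlinarith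
    nlinarith [hμ0 s, mul_le_mul_of_nonneg_right h1 (hμ0 s)]
  · set h : ℝ := min σ 1 with hh_def
    have hh : 0 < h := lt_min hσpos one_pos
    have hh1 : h ≤ 1 := min_le_right _ _
    have hhσ : h ≤ σ := min_le_left _ _
    set t : ℝ := σ - h with ht_def
    have htnn : (0:ℝ) ≤ t := by simp only [ht_def]; linarith
    have key := havg h hh t htnn s hs
    have ha : 0 < s + t := by linarith
    -- lower bound for the left integral
    have hInt1 : IntegrableOn μ (Ioc (s + t) (s + t + h)) := by
      apply hint.mono_set
      intro x hx
      exact lt_of_lt_of_le ha hx.1.le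
    have hlb : h * μ (σ + s) ≤ ∫ x in Ioc (s + t) (s + t + h), μ x := by
      have hmono' : ∀ x ∈ Ioc (s + t) (s + t + h), μ (s + t + h) ≤ μ x := by
        intro x hx
        exact hmono (lt_of_lt_of_le ha hx.1.le) (by positivity : (0:ℝ) < s + t + h) hx.2
      have hc : ∫ x in Ioc (s + t) (s + t + h), μ (s + t + h)
          ≤ ∫ x in Ioc (s + t) (s + t + h), μ x :=
        setIntegral_mono_on (integrableOn_const measure_Ioc_lt_top.ne)
          hInt1 measurableSet_Ioc hmono'
      have hcv : ∫ _x in Ioc (s + t) (s + t + h), μ (s + t + h)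
          = h * μ (s + t + h) := by
        rw [setIntegral_const, measureReal_def, Real.volume_Ioc, smul_eq_mul]
        congr 1
        rw [ENNReal.toReal_ofReal (by linarith)]
        ring
      have heq : σ + s = s + t + h := by simp [ht_def]; ring
      rw [heq]
      linarith [hc, hcv.symm.le]
    -- upper bound for the right integral
    have hub : ∫ x in Ioc s (s + h), μ x ≤ h * μ s := by
      have hInt2 : IntegrableOn μ (Ioc s (s + h)) := by
        apply hint.mono_set
        intro x hx
        exact lt_trans hs hx.1
      have hmono' : ∀ x ∈ Ioc s (s + h), μ x ≤ μ s := by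
        intro x hx
        exact hmono hs (lt_trans hs hx.1) hx.1.le
      have hc : ∫ x in Ioc s (s + h), μ x ≤ ∫ _x in Ioc s (s + h), μ s :=
        setIntegral_mono_on hInt2 (integrableOn_const measure_Ioc_lt_top.ne)
          measurableSet_Ioc hmono'
      have hcv : ∫ _x in Ioc s (s + h), μ s = h * μ s := by
        rw [setIntegral_const, measureReal_def, Real.volume_Ioc, smul_eq_mul]
        congr 1
        rw [ENNReal.toReal_ofReal (by linarith)]
        ring
      linarith [hc, hcv.le]
    have hE : Real.exp (-2 * ω * t) ≤ Real.exp (2 * ω) * Real.exp (-(2 * ω) * σ) := by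
      rw [← Real.exp_add]
      apply Real.exp_le_exp.2
      have : -2 * ω * t = 2 * ω * h + -(2 * ω) * σ := by simp [ht_def]; ring
      rw [this]
      have : 2 * ω * h ≤ 2 * ω := by nlinarith
      linarith
    -- combine
    have hchain : h * μ (σ + s) ≤ K ^ 2 * Real.exp (-2 * ω * t) * (h * μ s) := by
      calc h * μ (σ + s) ≤ ∫ x in Ioc (s + t) (s + t + h), μ x := hlb
        _ ≤ K ^ 2 * Real.exp (-2 * ω * t) * ∫ x in Ioc s (s + h), μ x := key
        _ ≤ K ^ 2 * Real.exp (-2 * ω * t) * (h * μ s) := by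
            apply mul_le_mul_of_nonneg_left hub
            positivity
    have hfin : μ (σ + s) ≤ K ^ 2 * Real.exp (-2 * ω * t) * μ s := by
      rw [show K ^ 2 * Real.exp (-2 * ω * t) * (h * μ s)
            = h * (K ^ 2 * Real.exp (-2 * ω * t) * μ s) by ring] at hchain
      exact le_of_mul_le_mul_left (by linarith) hh
    calc μ (σ + s) ≤ K ^ 2 * Real.exp (-2 * ω * t) * μ s := hfin
      _ ≤ K ^ 2 * (Real.exp (2 * ω) * Real.exp (-(2 * ω) * σ)) * μ s := by
          apply mul_le_mul_of_nonneg_right _ (hμ0 s)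
          exact mul_le_mul_of_nonneg_left hE (by positivity)
      _ = K ^ 2 * Real.exp (2 * ω) * Real.exp (-(2 * ω) * σ) * μ s := by ring
end
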